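/- arXiv:math/0608714 — 2 statements merged into one kernel-verified Lean document; each statement's English description precedes it below -/
import Mathlib

section
/- Let r_1,...,r_n be positive integers, q_1,...,q_n nonzero rationals, and let V ⊂ (C*)^n be the solution set of the diagonal system Z_j^{r_j} = q_j (1 ≤ j ≤ n). Let u = u_1 Z_1 + ... + u_n Z_n with u_i ≠ 0 for all i, and define recursively m_1(Y) := u_1^{-r_1} Y^{r_1} − q_1 and m_i(Y) := Res_W(u_i^{-r_i}(Y − W)^{r_i} − q_i, m_{i−1}(W)) for 2 ≤ i ≤ n. Then every point x ∈ V satisfies m_n(u(x)) = 0, and m_n has degree r_1···r_n = #V. If moreover u separates the points of V, then m_n is (up to a nonzero rational scalar) the minimal polynomial of u on V, i.e., m_n is proportional to Π_{x∈V}(Y − u(x)). -/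
open Polynomial

/-- The resultant with respect to `W` of `f ∈ ℂ[Y][W]` (outer variable `W`,
coefficients in `ℂ[Y]`) and `g ∈ ℂ[W]`, via the classical root formula
`Res_W(f,g) = lc(g)^{deg_W f}·Π_{g(β)=0} f(Y,β)` (roots with multiplicity). -/
noncomputable def resW (f : Polynomial (Polynomial ℂ)) (g : Polynomial ℂ) :
    Polynomial ℂ :=
  Polynomial.C (g.leadingCoeff ^ f.natDegree) *
    (g.roots.map fun b => f.eval (Polynomial.C b)).prod


private lemma nthRoots_card' {k : ℕ} (hk : 0 < k) (a : ℂ) :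
    Multiset.card (nthRoots k a) = k := by
  have hs : ((X : ℂ[X]) ^ k - C a).Splits := IsAlgClosed.splits _
  rw [nthRoots, (splits_iff_card_roots).1 hs, natDegree_X_pow_sub_C]

private lemma nthRoots_nodup' {k : ℕ} {a : ℂ} (hk : 0 < k) (ha : a ≠ 0) :
    (nthRoots k a).Nodup :=
  nodup_roots (separable_X_pow_sub_C a (Nat.cast_ne_zero.2 hk.ne') ha)

private lemma X_pow_sub_C_eq_prod' {k : ℕ} (hk : 0 < k) {a : ℂ} :
    ((X : ℂ[X]) ^ k - C a) = ((nthRoots k a).map fun w => X - C w).prod := by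
  have h := prod_multiset_X_sub_C_of_monic_of_roots_card_eq
    (monic_X_pow_sub_C a hk.ne') ?_
  · rw [← nthRoots] at h; exact h.symm
  · rw [← nthRoots, nthRoots_card' hk, natDegree_X_pow_sub_C]

private lemma shifted_pow_factor {k : ℕ} (hk : 0 < k) {a b : ℂ} :
    ((X - C b) ^ k - C a : ℂ[X]) =
      ((nthRoots k a).map fun w => X - C (b + w)).prod := by
  have h : (((X : ℂ[X]) ^ k - C a)).comp (X - C b) = (X - C b) ^ k - C a := by
    simp [sub_comp, pow_comp]
  rw [← h, X_pow_sub_C_eq_prod' hk, multiset_prod_comp, Multiset.map_map]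
  congr 1
  apply Multiset.map_congr rfl
  intro w _
  simp only [Function.comp_apply, sub_comp, X_comp, C_comp, C_add]
  ring

noncomputable def Tdiag (r : ℕ → ℕ) (c : ℕ → ℂ) : ℕ → Multiset ℂ
  | 0 => nthRoots (r 0) (c 0)
  | (i+1) => (Tdiag r c i).bind fun b => (nthRoots (r (i+1)) (c (i+1))).map fun w => b + w

private lemma piFinset_one' (t : Fin 1 → Finset ℂ) :
    Fintype.piFinset t = (t 0).map ⟨fun x _ => x, fun x y h => congrFun h 0⟩ := by
  ext f
  simp only [Fintype.mem_piFinset, Finset.mem_map, Function.Embedding.coeFn_mk]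
  constructor
  · intro h
    exact ⟨f 0, h 0, by funext j; rw [Fin.eq_zero j]; rfl⟩
  · rintro ⟨x, hx, rfl⟩ j
    rw [Fin.eq_zero j]; exact hx

private lemma snoc_injective' (k : ℕ) : Function.Injective
    (fun p : (Fin k → ℂ) × ℂ => (Fin.snoc p.1 p.2 : Fin (k+1) → ℂ)) := by
  rintro ⟨g, w⟩ ⟨g', w'⟩ h
  simp only at h
  have h1 : g = g' := by
    funext j
    have := congrFun h j.castSucc
    simpa using this
  have h2 : w = w' := by
    have := congrFun h (Fin.last k)
    simpa using this
  simp [h1, h2]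

private lemma piFinset_snoc' (k : ℕ) (t : Fin (k+1) → Finset ℂ) :
    Fintype.piFinset t =
      ((Fintype.piFinset fun j : Fin k => t j.castSucc) ×ˢ t (Fin.last k)).map
        ⟨fun p => Fin.snoc p.1 p.2, snoc_injective' k⟩ := by
  ext f
  simp only [Fintype.mem_piFinset, Finset.mem_map, Finset.mem_product,
    Function.Embedding.coeFn_mk, Prod.exists]
  constructor
  · intro h
    refine ⟨Fin.init f, f (Fin.last k), ⟨?_, h _⟩, Fin.snoc_init_self f⟩
    intro j
    simpa [Fin.init] using h j.castSucc
  · rintro ⟨g, w, ⟨hg, hw⟩, rfl⟩ j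
    refine Fin.lastCases ?_ ?_ j
    · simpa using hw
    · intro j'
      simpa using hg j'

private lemma Tdiag_eq (r : ℕ → ℕ) (c : ℕ → ℂ) :
    ∀ i : ℕ, (∀ j ≤ i, 0 < r j ∧ c j ≠ 0) →
    Tdiag r c i = Multiset.map (fun g : Fin (i+1) → ℂ => ∑ j, g j)
      (Fintype.piFinset fun j : Fin (i+1) => (nthRoots (r j.val) (c j.val)).toFinset).val := by
  intro i
  induction i with
  | zero =>
    intro h
    rw [piFinset_one', Finset.map_val, Multiset.map_map]
    simp only [Fin.val_zero]
    have hd : (nthRoots (r 0) (c 0)).toFinset.val = nthRoots (r 0) (c 0) := by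
      rw [Multiset.toFinset_val, Multiset.dedup_eq_self.2]
      exact nodup_roots (separable_X_pow_sub_C _ (Nat.cast_ne_zero.2 (h 0 le_rfl).1.ne') (h 0 le_rfl).2)
    rw [hd]
    show nthRoots (r 0) (c 0) = _
    conv_lhs => rw [← Multiset.map_id' (nthRoots (r 0) (c 0))]
    apply Multiset.map_congr rfl
    intro x _
    simp
    rfl
  | succ i IH =>
    intro h
    have hIH := IH fun j hj => h j (hj.trans (Nat.le_succ i))
    have hd : (nthRoots (r (i+1)) (c (i+1))).toFinset.val = nthRoots (r (i+1)) (c (i+1)) := by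
      rw [Multiset.toFinset_val, Multiset.dedup_eq_self.2]
      exact nodup_roots (separable_X_pow_sub_C _
        (Nat.cast_ne_zero.2 (h (i+1) le_rfl).1.ne') (h (i+1) le_rfl).2)
    show (Tdiag r c i).bind _ = _
    rw [hIH, Multiset.bind_map]
    conv_rhs => rw [piFinset_snoc']
    rw [Finset.map_val, Finset.product_val, Multiset.map_map]
    simp only [Fin.coe_castSucc, Fin.val_last]
    rw [show ((Fintype.piFinset fun j : Fin (i+1) =>
          (nthRoots (r j.val) (c j.val)).toFinset).val ×ˢ
          (nthRoots (r (i+1)) (c (i+1))).toFinset.val)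
        = (Fintype.piFinset fun j : Fin (i+1) =>
            (nthRoots (r j.val) (c j.val)).toFinset).val.bind
          (fun g => ((nthRoots (r (i+1)) (c (i+1))).toFinset.val).map (Prod.mk g)) from rfl]
    rw [Multiset.map_bind, hd]
    apply Multiset.bind_congr
    intro g _
    rw [Multiset.map_map]
    apply Multiset.map_congr rfl
    intro w _
    show _ = ∑ j : Fin (i+1+1), (Fin.snoc g w : Fin (i+1+1) → ℂ) j
    rw [Fin.sum_univ_castSucc (f := (Fin.snoc g w : Fin (i+1+1) → ℂ))]
    congr 1
    · exact Finset.sum_congr rfl fun j _ => by simp [Fin.snoc_castSucc]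
    · simp [Fin.snoc_last]
private lemma resW_step {ρ : ℕ} (hρ : 0 < ρ) {a cc qq e : ℂ} (ha : a ≠ 0)
    (he : e ≠ 0) (hqa : a * cc = qq) (T : Multiset ℂ) :
    resW (Polynomial.C (Polynomial.C a) * (Polynomial.C Polynomial.X - Polynomial.X) ^ ρ
        - Polynomial.C (Polynomial.C qq))
      (Polynomial.C e * (T.map fun t => Polynomial.X - Polynomial.C t).prod)
    = Polynomial.C (e ^ ρ * a ^ Multiset.card T) *
      ((T.bind fun b => (Polynomial.nthRoots ρ cc).map fun w => b + w).map
        fun t => Polynomial.X - Polynomial.C t).prod := by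
  set f : Polynomial (Polynomial ℂ) :=
    Polynomial.C (Polynomial.C a) * (Polynomial.C Polynomial.X - Polynomial.X) ^ ρ
      - Polynomial.C (Polynomial.C qq) with hf
  have hCa : (Polynomial.C a : ℂ[X]) ≠ 0 := fun h => ha (by simpa using congrArg (eval 0) h)
  have hdeg : f.natDegree = ρ := by
    rw [hf, natDegree_sub_C, natDegree_C_mul hCa, natDegree_pow,
      show (Polynomial.C Polynomial.X - Polynomial.X : Polynomial (Polynomial ℂ))
        = -(Polynomial.X - Polynomial.C Polynomial.X) by ring,
      natDegree_neg, natDegree_X_sub_C, mul_one]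
  have hmon : ((T.map fun t => (Polynomial.X : ℂ[X]) - Polynomial.C t).prod).Monic :=
    monic_multiset_prod_of_monic _ _ fun t _ => monic_X_sub_C t
  have hlc : (Polynomial.C e * (T.map fun t => (Polynomial.X : ℂ[X]) - Polynomial.C t).prod).leadingCoeff = e := by
    rw [leadingCoeff_mul, leadingCoeff_C, hmon.leadingCoeff, mul_one]
  have hroots : (Polynomial.C e * (T.map fun t => (Polynomial.X : ℂ[X]) - Polynomial.C t).prod).roots = T := by
    rw [roots_C_mul _ he, roots_multiset_prod_X_sub_C]
  have heval : ∀ b : ℂ, f.eval (Polynomial.C b) =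
      Polynomial.C a * ((nthRoots ρ cc).map fun w => Polynomial.X - Polynomial.C (b + w)).prod := by
    intro b
    have h1 : f.eval (Polynomial.C b) = Polynomial.C a * ((Polynomial.X - Polynomial.C b) ^ ρ - Polynomial.C cc) := by
      rw [hf]
      simp only [eval_sub, eval_mul, eval_pow, eval_C, eval_X]
      rw [← hqa, C_mul]
      ring
    rw [h1, shifted_pow_factor hρ]
  unfold resW
  rw [hlc, hdeg, hroots, Multiset.map_congr rfl fun b _ => heval b,
    Multiset.prod_map_mul, Multiset.map_const', Multiset.prod_replicate,
    Multiset.map_bind, Multiset.prod_bind]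
  have : ∀ b : ℂ, ((nthRoots ρ cc).map fun w => b + w).map
      (fun t => (Polynomial.X : ℂ[X]) - Polynomial.C t)
      = (nthRoots ρ cc).map fun w => Polynomial.X - Polynomial.C (b + w) :=
    fun b => Multiset.map_map _ _ _
  rw [Multiset.map_congr rfl fun b _ => congrArg Multiset.prod (this b)]
  rw [C_mul, C_pow, C_pow]
  ring

/-- **Solving a diagonal binomial system by iterated resultants.** Let
`V ⊆ (ℂ*)ⁿ` be the solution set of `Z_j^{r_j} = q_j` with `q_j ≠ 0`, let
`u = u₁Z₁ + ⋯ + uₙZₙ` with all `uᵢ ≠ 0`, and define `m₁,…,mₙ` by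
`m₁(Y) = u₁^{-r₁}Y^{r₁} - q₁` and
`m_{i+1}(Y) = Res_W(u_{i+1}^{-r_{i+1}}(Y-W)^{r_{i+1}} - q_{i+1}, m_i(W))`.
Then every `x ∈ V` satisfies `mₙ(u(x)) = 0`, `deg mₙ = r₁⋯rₙ = #V`, and if
`u` separates the points of `V` then `mₙ` is a nonzero rational multiple of
the minimal polynomial `Π_{x∈V}(Y - u(x))`. -/
theorem diagonal_system_minimal_polynomial (n : ℕ) (hn : 0 < n)
    (r : ℕ → ℕ) (q u : ℕ → ℚ)
    (hr : ∀ i < n, 0 < r i) (hq : ∀ i < n, q i ≠ 0) (hu : ∀ i < n, u i ≠ 0)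
    (m : ℕ → Polynomial ℂ)
    (hm0 : m 0 = Polynomial.C ((u 0 : ℂ)⁻¹ ^ r 0) * Polynomial.X ^ r 0
      - Polynomial.C (q 0 : ℂ))
    (hmrec : ∀ i, i + 1 < n → m (i + 1) = resW
      (Polynomial.C (Polynomial.C ((u (i + 1) : ℂ)⁻¹ ^ r (i + 1))) *
          (Polynomial.C Polynomial.X - Polynomial.X) ^ r (i + 1)
        - Polynomial.C (Polynomial.C (q (i + 1) : ℂ)))
      (m i))
    (V : Set (Fin n → ℂ))
    (hV : V = {z : Fin n → ℂ | ∀ j : Fin n, z j ^ r j.val = (q j.val : ℂ)})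
    (hVfin : V.Finite) :
    (∀ z ∈ V, (m (n - 1)).eval (∑ j : Fin n, (u j.val : ℂ) * z j) = 0) ∧
    (m (n - 1)).natDegree = ∏ i ∈ Finset.range n, r i ∧
    V.ncard = ∏ i ∈ Finset.range n, r i ∧
    (Set.InjOn (fun z : Fin n → ℂ => ∑ j : Fin n, (u j.val : ℂ) * z j) V →
      ∃ c : ℚ, c ≠ 0 ∧ m (n - 1) = Polynomial.C (c : ℂ) *
        ∏ z ∈ hVfin.toFinset,
          (Polynomial.X - Polynomial.C (∑ j : Fin n, (u j.val : ℂ) * z j))) := by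
  obtain ⟨N, rfl⟩ : ∃ N, n = N + 1 := ⟨n - 1, (Nat.succ_pred_eq_of_pos hn).symm⟩
  simp only [Nat.add_sub_cancel]
  have huC : ∀ i ≤ N, (u i : ℂ) ≠ 0 := fun i _ => Rat.cast_ne_zero.2 (hu i (by omega))
  have hqC : ∀ i ≤ N, (q i : ℂ) ≠ 0 := fun i _ => Rat.cast_ne_zero.2 (hq i (by omega))
  set cc : ℕ → ℂ := fun j => (q j : ℂ) * (u j : ℂ) ^ (r j) with hcc
  have hccne : ∀ j ≤ N, cc j ≠ 0 := fun j hj =>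
    mul_ne_zero (hqC j hj) (pow_ne_zero _ (huC j hj))
  have main : ∀ i ≤ N, ∃ c : ℚ, c ≠ 0 ∧
      m i = Polynomial.C (c : ℂ) *
        ((Tdiag r cc i).map fun t => Polynomial.X - Polynomial.C t).prod := by
    intro i
    induction i with
    | zero =>
      intro _
      refine ⟨(u 0)⁻¹ ^ (r 0), pow_ne_zero _ (inv_ne_zero (hu 0 (by omega))), ?_⟩
      have h1 : m 0 = Polynomial.C ((u 0 : ℂ)⁻¹ ^ r 0) *
          (Polynomial.X ^ r 0 - Polynomial.C (cc 0)) := by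
        rw [hm0, mul_sub, ← Polynomial.C_mul]
        congr 2
        rw [hcc]
        have := huC 0 (by omega)
        field_simp
        rw [mul_assoc, ← mul_pow, one_div, inv_mul_cancel₀ this, one_pow, mul_one]
      rw [h1, show Tdiag r cc 0 = Polynomial.nthRoots (r 0) (cc 0) from rfl,
        ← X_pow_sub_C_eq_prod' (hr 0 (by omega))]
      congr 1
      push_cast
      ring
    | succ i IH =>
      intro hi
      obtain ⟨c, hc, hmi⟩ := IH (by omega)
      have hcC : ((c : ℂ)) ≠ 0 := Rat.cast_ne_zero.2 hc
      have hqa : ((u (i+1) : ℂ)⁻¹ ^ r (i+1)) * cc (i+1) = (q (i+1) : ℂ) := by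
        rw [hcc]
        have := huC (i+1) (by omega)
        field_simp
        rw [mul_comm _ (q (i+1) : ℂ), mul_assoc, ← mul_pow, one_div, inv_mul_cancel₀ this, one_pow, mul_one]
      refine ⟨c ^ (r (i+1)) * ((u (i+1))⁻¹ ^ (r (i+1))) ^ (Multiset.card (Tdiag r cc i)),
        mul_ne_zero (pow_ne_zero _ hc)
          (pow_ne_zero _ (pow_ne_zero _ (inv_ne_zero (hu (i+1) (by omega))))), ?_⟩
      rw [hmrec i (by omega), hmi,
        resW_step (hr (i+1) (by omega))
          (pow_ne_zero _ (inv_ne_zero (huC (i+1) (by omega)))) hcC hqa (Tdiag r cc i)]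
      rw [show Tdiag r cc (i+1) = (Tdiag r cc i).bind
        (fun b => (Polynomial.nthRoots (r (i+1)) (cc (i+1))).map fun w => b + w) from rfl]
      congr 1
      push_cast
      ring
  obtain ⟨c, hc, hmN⟩ := main N le_rfl
  set R : Fin (N+1) → Finset ℂ :=
    fun j => (Polynomial.nthRoots (r j.val) ((q j.val : ℂ))).toFinset with hR
  have hVto : hVfin.toFinset = Fintype.piFinset R := by
    ext z
    rw [Set.Finite.mem_toFinset, hV, Set.mem_setOf_eq, Fintype.mem_piFinset]
    constructor
    · intro hz j
      rw [hR, Multiset.mem_toFinset, mem_nthRoots (hr j.val j.isLt)]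
      exact hz j
    · intro hz j
      have := hz j
      rw [hR, Multiset.mem_toFinset, mem_nthRoots (hr j.val j.isLt)] at this
      exact this
  have hTm := Tdiag_eq r cc N (fun j hj => ⟨hr j (by omega), hccne j hj⟩)
  have hRim : ∀ j : Fin (N+1), (Polynomial.nthRoots (r j.val) (cc j.val)).toFinset
      = (R j).image (fun x => (u j.val : ℂ) * x) := by
    intro j
    have hj : j.val ≤ N := by omega
    ext w
    rw [Multiset.mem_toFinset, mem_nthRoots (hr j.val j.isLt), Finset.mem_image]
    constructor
    · intro hw
      have hune := huC j.val (by omega)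
      refine ⟨(u j.val : ℂ)⁻¹ * w, ?_, by field_simp⟩
      rw [hR, Multiset.mem_toFinset, mem_nthRoots (hr j.val j.isLt), mul_pow, hw, hcc]
      field_simp
      rw [mul_comm _ (q j.val : ℂ), mul_assoc, ← mul_pow, one_div, inv_mul_cancel₀ hune, one_pow, mul_one]
    · rintro ⟨x, hx, rfl⟩
      rw [hR, Multiset.mem_toFinset, mem_nthRoots (hr j.val j.isLt)] at hx
      rw [mul_pow, hx, hcc]
      ring
  have hinj : Set.InjOn (fun z : Fin (N+1) → ℂ => fun j : Fin (N+1) => (u j.val : ℂ) * z j)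
      (Fintype.piFinset R : Finset (Fin (N+1) → ℂ)) := by
    intro x _ y _ h
    funext j
    exact mul_left_cancel₀ (huC j.val (by omega)) (congrFun h j)
  have hval : (Fintype.piFinset fun j : Fin (N+1) =>
        (Polynomial.nthRoots (r j.val) (cc j.val)).toFinset).val
      = (Fintype.piFinset R).val.map (fun z j => (u j.val : ℂ) * z j) := by
    have h1 : (Fintype.piFinset fun j : Fin (N+1) =>
          (Polynomial.nthRoots (r j.val) (cc j.val)).toFinset)
        = (Fintype.piFinset R).image (fun z j => (u j.val : ℂ) * z j) := by
      rw [show (fun j : Fin (N+1) => (Polynomial.nthRoots (r j.val) (cc j.val)).toFinset)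
          = fun j => (R j).image (fun x => (u j.val : ℂ) * x) from funext hRim,
        Fintype.piFinset_image]
    rw [h1, Finset.image_val_of_injOn hinj]
  have hTmV : Tdiag r cc N = hVfin.toFinset.val.map
      (fun z : Fin (N+1) → ℂ => ∑ j : Fin (N+1), (u j.val : ℂ) * z j) := by
    rw [hTm, hval, Multiset.map_map, hVto]
    rfl
  have hnodupq : ∀ j : Fin (N+1), (Polynomial.nthRoots (r j.val) ((q j.val : ℂ))).Nodup :=
    fun j => nthRoots_nodup' (hr j.val j.isLt) (hqC j.val (by omega))
  have hcardR : ∀ j : Fin (N+1), (R j).card = r j.val := fun j => by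
    rw [hR, Multiset.toFinset_card_of_nodup (hnodupq j), nthRoots_card' (hr j.val j.isLt)]
  have hcardV : hVfin.toFinset.card = ∏ i ∈ Finset.range (N+1), r i := by
    rw [hVto, Fintype.card_piFinset, ← Fin.prod_univ_eq_prod_range]
    exact Finset.prod_congr rfl fun j _ => hcardR j
  have hcardT : Multiset.card (Tdiag r cc N) = ∏ i ∈ Finset.range (N+1), r i := by
    rw [hTmV, Multiset.card_map]
    exact hcardV
  have hcC : ((c : ℂ)) ≠ 0 := Rat.cast_ne_zero.2 hc
  refine ⟨?_, ?_, ?_, fun _ => ⟨c, hc, ?_⟩⟩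
  · intro z hz
    rw [hmN, eval_mul]
    apply mul_eq_zero_of_right
    rw [eval_multiset_prod, Multiset.map_map]
    apply Multiset.prod_eq_zero
    refine Multiset.mem_map.2 ⟨∑ j : Fin (N+1), (u j.val : ℂ) * z j, ?_, by
      show eval _ (Polynomial.X - Polynomial.C _) = 0
      rw [eval_sub, eval_X, eval_C, sub_self]⟩
    rw [hTmV]
    exact Multiset.mem_map.2 ⟨z, Finset.mem_val.mpr (hVfin.mem_toFinset.2 hz), rfl⟩
  · rw [hmN, natDegree_C_mul hcC, natDegree_multiset_prod_X_sub_C_eq_card, hcardT]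
  · rw [Set.ncard_eq_toFinset_card V hVfin, hcardV]
  · rw [hmN, Finset.prod_eq_multiset_prod, hTmV, Multiset.map_map]
    rfl
end

section
/- Let V be a zero-dimensional variety of D distinct points in C^n defined over Q, let Λ = (Λ_1,...,Λ_n) be indeterminates, U = Λ_1 X_1 + ... + Λ_n X_n, and m_U(Λ,Y) = Π_{j=1}^D (Y − U(ξ^{(j)})) the minimal polynomial of U over V. Then for 1 ≤ k ≤ n, the polynomial (∂m_U/∂Y)(Λ, U(X))·X_k + (∂m_U/∂Λ_k)(Λ, U(X)) lies in the ideal I(A^n × V) ⊂ Q[Λ, X_1,...,X_n], and deg_Y(∂m_U/∂Λ_k) ≤ D − 1. -/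
open Polynomial

noncomputable def Phi {n : ℕ} (k : Fin n) (p : Polynomial (MvPolynomial (Fin n) ℂ)) :
    Polynomial (MvPolynomial (Fin n) ℂ) :=
  p.sum fun e a => Polynomial.monomial e (MvPolynomial.pderiv k a)

lemma coeff_Phi {n : ℕ} (k : Fin n) (p : Polynomial (MvPolynomial (Fin n) ℂ)) (m : ℕ) :
    (Phi k p).coeff m = MvPolynomial.pderiv k (p.coeff m) := by
  rw [Phi, Polynomial.sum_def, Polynomial.finset_sum_coeff]
  simp only [Polynomial.coeff_monomial]
  rw [Finset.sum_ite_eq' p.support m fun e => MvPolynomial.pderiv k (p.coeff e)]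
  split_ifs with h
  · rfl
  · rw [Polynomial.notMem_support_iff.mp h, map_zero]

lemma Phi_mul {n : ℕ} (k : Fin n) (p q : Polynomial (MvPolynomial (Fin n) ℂ)) :
    Phi k (p * q) = Phi k p * q + p * Phi k q := by
  ext m
  simp only [coeff_Phi, Polynomial.coeff_add, Polynomial.coeff_mul, map_sum,
    MvPolynomial.pderiv_mul, coeff_Phi, Finset.sum_add_distrib]

lemma Phi_one {n : ℕ} (k : Fin n) : Phi k (1 : Polynomial (MvPolynomial (Fin n) ℂ)) = 0 := by
  ext m
  simp [coeff_Phi, Polynomial.coeff_one, apply_ite (MvPolynomial.pderiv k)]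

lemma Phi_prod {n : ℕ} (k : Fin n) {ι : Type*} [DecidableEq ι] (s : Finset ι)
    (f : ι → Polynomial (MvPolynomial (Fin n) ℂ)) :
    Phi k (∏ j ∈ s, f j) = ∑ j ∈ s, Phi k (f j) * ∏ j' ∈ s.erase j, f j' := by
  induction s using Finset.induction_on with
  | empty => simp [Phi_one]
  | @insert a s ha ih =>
    rw [Finset.prod_insert ha, Phi_mul, ih, Finset.sum_insert ha, Finset.erase_insert ha,
      Finset.mul_sum]
    rw [add_right_inj]
    refine Finset.sum_congr rfl fun j hj => ?_
    rw [Finset.erase_insert_of_ne (by rintro rfl; exact ha hj),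
      Finset.prod_insert (fun h => ha (Finset.mem_of_mem_erase h))]
    ring

lemma Phi_X_sub_C {n : ℕ} (k : Fin n) (u : MvPolynomial (Fin n) ℂ) :
    Phi k (Polynomial.X - Polynomial.C u)
      = -Polynomial.C (MvPolynomial.pderiv k u) := by
  ext m
  rw [coeff_Phi]
  simp only [Polynomial.coeff_sub, Polynomial.coeff_X, Polynomial.coeff_C,
    Polynomial.coeff_neg, map_sub]
  split_ifs with h1 h2 h2 <;> simp

lemma deriv_prod_finset {R : Type*} [CommRing R] {ι : Type*} [DecidableEq ι] (s : Finset ι)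
    (f : ι → Polynomial R) :
    Polynomial.derivative (∏ j ∈ s, f j)
      = ∑ j ∈ s, Polynomial.derivative (f j) * ∏ j' ∈ s.erase j, f j' := by
  induction s using Finset.induction_on with
  | empty => simp
  | @insert a s ha ih =>
    rw [Finset.prod_insert ha, derivative_mul, ih, Finset.sum_insert ha,
      Finset.erase_insert ha, Finset.mul_sum]
    congr 1
    refine Finset.sum_congr rfl fun j hj => ?_
    rw [Finset.erase_insert_of_ne (by rintro rfl; exact ha hj),
      Finset.prod_insert (fun h => ha (Finset.mem_of_mem_erase h))]
    ring

/-- **Parametrizations from the generic minimal polynomial.** Let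
`V = {ξ⁽¹⁾,…,ξ⁽ᴰ⁾} ⊆ ℂⁿ` be `D` distinct points, `U = Λ₁X₁ + ⋯ + ΛₙXₙ` the
generic linear form and `m_U(Λ,Y) = Π_j (Y - U(ξ⁽ʲ⁾))` its minimal polynomial
over `V` (a polynomial in `Y` with coefficients in `ℂ[Λ]`). Then for each `k`,
`(∂m_U/∂Y)(Λ,U(x))·x_k + (∂m_U/∂Λ_k)(Λ,U(x))` vanishes identically on
`𝔸ⁿ × V` (i.e. lies in the vanishing ideal `I(𝔸ⁿ × V)`), and
`deg_Y(∂m_U/∂Λ_k) ≤ D - 1`. -/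
theorem generic_minimal_polynomial_parametrization (n D : ℕ)
    (ξ : Fin D → Fin n → ℂ) (hξ : Function.Injective ξ) (k : Fin n) :
    let mU : Polynomial (MvPolynomial (Fin n) ℂ) :=
      ∏ j : Fin D, (Polynomial.X -
        Polynomial.C (∑ i, MvPolynomial.X i * MvPolynomial.C (ξ j i)))
    let dLam : Polynomial (MvPolynomial (Fin n) ℂ) :=
      mU.sum fun e a => Polynomial.monomial e (MvPolynomial.pderiv k a)
    (∀ (lam : Fin n → ℂ) (j : Fin D),
      Polynomial.eval₂ (MvPolynomial.eval lam) (∑ i, lam i * ξ j i)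
          (Polynomial.derivative mU) * ξ j k
        + Polynomial.eval₂ (MvPolynomial.eval lam) (∑ i, lam i * ξ j i) dLam = 0)
      ∧ dLam.natDegree ≤ D - 1 := by
  intro mU dLam
  -- abbreviations
  set u : Fin D → MvPolynomial (Fin n) ℂ :=
    fun j => ∑ i, MvPolynomial.X i * MvPolynomial.C (ξ j i) with hu
  have hpderiv_u : ∀ j, MvPolynomial.pderiv k (u j) = MvPolynomial.C (ξ j k) := by
    intro j
    rw [hu]
    rw [map_sum]
    simp [MvPolynomial.pderiv_X, Pi.single_apply]
  have hdLam : dLam = Phi k mU := rfl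
  have hPhi : Phi k mU = ∑ j : Fin D, -Polynomial.C (MvPolynomial.C (ξ j k)) *
      ∏ j' ∈ Finset.univ.erase j, (Polynomial.X - Polynomial.C (u j')) := by
    rw [show mU = ∏ j : Fin D, (Polynomial.X - Polynomial.C (u j)) from rfl,
      Phi_prod]
    refine Finset.sum_congr rfl fun j _ => ?_
    rw [Phi_X_sub_C, hpderiv_u]
  have hderiv : Polynomial.derivative mU = ∑ j : Fin D,
      ∏ j' ∈ Finset.univ.erase j, (Polynomial.X - Polynomial.C (u j')) := by
    rw [show mU = ∏ j : Fin D, (Polynomial.X - Polynomial.C (u j)) from rfl,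
      deriv_prod_finset]
    refine Finset.sum_congr rfl fun j _ => ?_
    simp
  constructor
  · intro lam j
    set y : Fin D → ℂ := fun j' => ∑ i, lam i * ξ j' i with hy
    have huy : ∀ j', MvPolynomial.eval lam (u j') = y j' := by
      intro j'; rw [hu, hy]; simp
    set E : Polynomial (MvPolynomial (Fin n) ℂ) →+* ℂ :=
      Polynomial.eval₂RingHom (MvPolynomial.eval lam) (y j) with hE
    have hEfac : ∀ j', E (Polynomial.X - Polynomial.C (u j')) = y j - y j' := by
      intro j'
      rw [hE]
      simp [huy]
    have hprod : ∀ j0 : Fin D, j0 ≠ j →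
        E (∏ j' ∈ Finset.univ.erase j0, (Polynomial.X - Polynomial.C (u j'))) = 0 := by
      intro j0 hj0
      rw [map_prod]
      refine Finset.prod_eq_zero (Finset.mem_erase.mpr ⟨Ne.symm hj0, Finset.mem_univ j⟩) ?_
      rw [hEfac, sub_self]
    have hEderiv : Polynomial.eval₂ (MvPolynomial.eval lam) (y j)
        (Polynomial.derivative mU)
        = ∏ j' ∈ Finset.univ.erase j, (y j - y j') := by
      show E _ = _
      rw [hderiv, map_sum, Finset.sum_eq_single j (fun j0 _ h => hprod j0 h)
        (fun h => absurd (Finset.mem_univ j) h), map_prod]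
      exact Finset.prod_congr rfl fun j' _ => hEfac j'
    have hEdLam : Polynomial.eval₂ (MvPolynomial.eval lam) (y j) dLam
        = -(ξ j k) * ∏ j' ∈ Finset.univ.erase j, (y j - y j') := by
      show E _ = _
      rw [hdLam, hPhi, map_sum, Finset.sum_eq_single j
        (fun j0 _ h => by rw [map_mul, hprod j0 h, mul_zero])
        (fun h => absurd (Finset.mem_univ j) h), map_mul, map_prod]
      congr 1
      · rw [hE]; simp
      · exact Finset.prod_congr rfl fun j' _ => hEfac j'
    rw [hEderiv, hEdLam]
    ring
  · rw [Polynomial.natDegree_le_iff_coeff_eq_zero]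
    intro m hm
    have hD : D ≤ m := by omega
    have hmonic : mU.Monic :=
      monic_prod_of_monic _ _ fun j _ => monic_X_sub_C (u j)
    have hdeg : mU.natDegree = D := by
      rw [show mU = ∏ j : Fin D, (Polynomial.X - Polynomial.C (u j)) from rfl]
      rw [Polynomial.natDegree_prod_of_monic _ _ fun j _ => monic_X_sub_C (u j)]
      simp [Polynomial.natDegree_X_sub_C]
    rw [hdLam, coeff_Phi]
    rcases eq_or_lt_of_le hD with h | h
    · subst h
      rw [← hdeg, hmonic.coeff_natDegree, Derivation.map_one_eq_zero]
    · rw [Polynomial.coeff_eq_zero_of_natDegree_lt (by omega), map_zero]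
end
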